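/- Let G be a subgraph of the complete bipartite graph K_{7,30} with parts X (of size 7) and Y (of size 30) such that G contains no copy of K_{2,2} and Δ(G_X) = 7, and let B = {x ∈ X : deg_G(x) = 7}. If |B| = 3 or |B| = 4, then the bipartite complement of G contains a copy of K_{5,5}. -/

import Mathlib

/-- A subgraph of the complete bipartite graph `K_{m,n}` is identified with its
edge set, a finset of pairs `(x, y)` with `x` in the part `X = Fin m` and
`y` in the part `Y = Fin n`.  `bContains s t E` says that the bipartite graph
with edge set `E` contains a copy of `K_{s,t}`: there are `s` distinct
vertices of `X` and `t` distinct vertices of `Y` with all pairs present. -/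
def bContains {m n : ℕ} (s t : ℕ) (E : Finset (Fin m × Fin n)) : Prop :=
  ∃ (A : Finset (Fin m)) (B : Finset (Fin n)),
    A.card = s ∧ B.card = t ∧ ∀ x ∈ A, ∀ y ∈ B, (x, y) ∈ E

/-- The bipartite complement: edge set `(X × Y) \ E`. -/
def bCompl {m n : ℕ} (E : Finset (Fin m × Fin n)) : Finset (Fin m × Fin n) :=
  Finset.univ \ E

/-- The neighborhood `N_G(x) ⊆ Y` of a vertex `x ∈ X`. -/
def bNbhd {m n : ℕ} (E : Finset (Fin m × Fin n)) (x : Fin m) : Finset (Fin n) :=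
  Finset.univ.filter (fun y => (x, y) ∈ E)

/-- The degree of a vertex `x ∈ X`. -/
def bDeg {m n : ℕ} (E : Finset (Fin m × Fin n)) (x : Fin m) : ℕ :=
  (bNbhd E x).card

/-- `Δ(G_X)`: the maximum degree over the vertices of the part `X`. -/
def bMaxDegX {m n : ℕ} (E : Finset (Fin m × Fin n)) : ℕ :=
  Finset.univ.sup (fun x => bDeg E x)

theorem stmt_19 (E : Finset (Fin 7 × Fin 30))
    (hK : ¬ bContains 2 2 E) (hΔ : bMaxDegX E = 7)
    (hB : (Finset.univ.filter (fun x : Fin 7 => bDeg E x = 7)).card = 3 ∨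
          (Finset.univ.filter (fun x : Fin 7 => bDeg E x = 7)).card = 4) :
    bContains 5 5 (bCompl E) := by
  classical
  set W : Fin 30 → Finset (Fin 7) := fun y => Finset.univ.filter (fun x => (x, y) ∈ E) with hW
  -- row degrees ≤ 7
  have hdegx : ∀ x : Fin 7, bDeg E x ≤ 7 := fun x => by
    calc bDeg E x ≤ bMaxDegX E := Finset.le_sup (Finset.mem_univ x)
    _ = 7 := hΔ
  -- E.card ≤ 49
  have hrow : ∀ x : Fin 7, (E.filter (fun p => p.1 = x)).card = bDeg E x := by
    intro x
    apply Finset.card_nbij (fun p => p.2)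
    · intro p hp
      simp only [Finset.mem_coe, Finset.mem_filter] at hp
      simp only [bDeg, bNbhd, Finset.mem_coe, Finset.mem_filter, Finset.mem_univ, true_and]
      rw [← hp.2]; exact hp.1
    · intro p hp q hq hpq
      simp only [Finset.coe_filter, Set.mem_setOf_eq] at hp hq
      exact Prod.ext (hp.2.trans hq.2.symm) hpq
    · intro y hy
      simp only [bDeg, bNbhd, Finset.coe_filter, Set.mem_setOf_eq] at hy
      exact ⟨(x, y), by simp [hy.2], rfl⟩
  have hcardE : E.card ≤ 49 := by
    have h1 : E.card = ∑ x : Fin 7, (E.filter (fun p => p.1 = x)).card :=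
      Finset.card_eq_sum_card_fiberwise (fun p _ => Finset.mem_univ p.1)
    calc E.card = ∑ x : Fin 7, bDeg E x := by rw [h1]; exact Finset.sum_congr rfl (fun x _ => hrow x)
    _ ≤ ∑ _x : Fin 7, 7 := Finset.sum_le_sum (fun x _ => hdegx x)
    _ = 49 := by simp
  -- column degrees sum to E.card
  have hcol : ∀ y : Fin 30, (E.filter (fun p => p.2 = y)).card = (W y).card := by
    intro y
    apply Finset.card_nbij (fun p => p.1)
    · intro p hp
      simp only [Finset.mem_coe, Finset.mem_filter] at hp
      simp only [hW, Finset.mem_coe, Finset.mem_filter, Finset.mem_univ, true_and]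
      rw [← hp.2]; exact hp.1
    · intro p hp q hq hpq
      simp only [Finset.coe_filter, Set.mem_setOf_eq] at hp hq
      exact Prod.ext hpq (hp.2.trans hq.2.symm)
    · intro x hx
      simp only [hW, Finset.coe_filter, Set.mem_setOf_eq] at hx
      exact ⟨(x, y), by simp [hx.2], rfl⟩
  have hsumW : ∑ y : Fin 30, (W y).card = E.card := by
    have h1 : E.card = ∑ y : Fin 30, (E.filter (fun p => p.2 = y)).card :=
      Finset.card_eq_sum_card_fiberwise (fun p _ => Finset.mem_univ p.2)
    rw [h1]; exact Finset.sum_congr rfl (fun y _ => (hcol y).symm)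
  -- the 21 pairs
  set Q : Finset (Finset (Fin 7)) := Finset.powersetCard 2 Finset.univ with hQ
  have hQcard : Q.card = 21 := by
    rw [hQ, Finset.card_powersetCard, Finset.card_univ]
    decide
  -- pointwise: for each y, #(P ∈ Q, W y ⊆ P) + 5 * |W y| ≥ 11
  have hpoint : ∀ y : Fin 30, 11 ≤ (Q.filter (fun P => W y ⊆ P)).card + 5 * (W y).card := by
    intro y
    rcases Nat.lt_or_ge (W y).card 3 with h3 | h3
    · interval_cases h : (W y).card
      · -- card 0 : W y = ∅, filter = Q
        have he : W y = ∅ := Finset.card_eq_zero.mp h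
        have : Q.filter (fun P => W y ⊆ P) = Q := by
          apply Finset.filter_true_of_mem
          intro P _; rw [he]; exact Finset.empty_subset P
        rw [this, hQcard]; omega
      · -- card 1 : W y = {x}
        obtain ⟨x, hx⟩ := Finset.card_eq_one.mp h
        have h6 : (Finset.univ.erase x).card ≤ (Q.filter (fun P => W y ⊆ P)).card := by
          apply Finset.card_le_card_of_injOn (fun z => insert z {x})
          · intro z hz
            have hzx : z ≠ x := Finset.ne_of_mem_erase hz
            simp only [Finset.mem_coe, Finset.mem_filter, hQ, Finset.mem_powersetCard]
            refine ⟨⟨Finset.subset_univ _, ?_⟩, ?_⟩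
            · rw [Finset.card_insert_of_notMem (by simp [hzx]), Finset.card_singleton]
            · rw [hx]; exact Finset.subset_insert _ _
          · intro z hz w hw hzw
            have hzx : z ≠ x := Finset.ne_of_mem_erase hz
            have hzw' : insert z ({x} : Finset (Fin 7)) = insert w {x} := hzw
            have : z ∈ insert w ({x} : Finset (Fin 7)) := by
              rw [← hzw']; exact Finset.mem_insert_self _ _
            rcases Finset.mem_insert.mp this with h | h
            · exact h
            · exact absurd (Finset.mem_singleton.mp h) hzx
        have : (Finset.univ.erase x).card = 6 := by
          rw [Finset.card_erase_of_mem (Finset.mem_univ x), Finset.card_univ]; decide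
        omega
      · -- card 2 : W y itself is in the filter
        have h1 : W y ∈ Q.filter (fun P => W y ⊆ P) := by
          simp only [Finset.mem_filter, hQ, Finset.mem_powersetCard]
          exact ⟨⟨Finset.subset_univ _, h⟩, Finset.Subset.refl _⟩
        have := Finset.card_pos.mpr ⟨W y, h1⟩
        omega
    · omega
  -- double counting
  have hswap : ∑ y : Fin 30, (Q.filter (fun P => W y ⊆ P)).card
      = ∑ P ∈ Q, (Finset.univ.filter (fun y : Fin 30 => W y ⊆ P)).card := by
    simp_rw [Finset.card_filter]
    exact Finset.sum_comm
  have htot : 85 ≤ ∑ P ∈ Q, (Finset.univ.filter (fun y : Fin 30 => W y ⊆ P)).card := by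
    have h1 : 330 ≤ ∑ y : Fin 30, ((Q.filter (fun P => W y ⊆ P)).card + 5 * (W y).card) := by
      calc (330 : ℕ) = ∑ _y : Fin 30, 11 := by simp
      _ ≤ _ := Finset.sum_le_sum (fun y _ => hpoint y)
    rw [Finset.sum_add_distrib, ← Finset.mul_sum, hsumW, hswap] at h1
    omega
  -- some pair P with ≥ 5 columns
  have hex : ∃ P ∈ Q, 5 ≤ (Finset.univ.filter (fun y : Fin 30 => W y ⊆ P)).card := by
    by_contra hcon
    push_neg at hcon
    have : ∑ P ∈ Q, (Finset.univ.filter (fun y : Fin 30 => W y ⊆ P)).card ≤ Q.card * 4 :=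
      Finset.sum_le_card_nsmul _ _ 4 (fun P hP => by have := hcon P hP; omega)
    rw [hQcard] at this
    omega
  obtain ⟨P, hPQ, hP5⟩ := hex
  have hPcard : P.card = 2 := (Finset.mem_powersetCard.mp hPQ).2
  obtain ⟨B, hBsub, hBcard⟩ := Finset.exists_subset_card_eq hP5
  refine ⟨Pᶜ, B, ?_, hBcard, ?_⟩
  · rw [Finset.card_compl, hPcard]; rfl
  · intro x hx y hy
    simp only [bCompl, Finset.mem_sdiff, Finset.mem_univ, true_and]
    intro hxy
    have hWy : W y ⊆ P := (Finset.mem_filter.mp (hBsub hy)).2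
    have : x ∈ W y := by simp [hW, hxy]
    exact (Finset.mem_compl.mp hx) (hWy this)
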